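/- arXiv:2604.02968 — 3 statements merged into one kernel-verified Lean document; each statement's English description precedes it below -/
import Mathlib

section
/- Suppose that (I) for each p = 1,...,p̂ and every δ ∈ ℝ^m for which the sub-SDPR optimal value η^p(δ) is finite, one has η^p(δ) = ζ^p(δ) (the sub-SDPR is exact), and (II) the combined SDPR for the right-hand side γ ∈ ℝ^m admits an optimal solution, i.e., a feasible tuple (X^1,...,X^p̂) attaining the infimum η(γ). Then η(γ) = ζ(γ), i.e., the combined SDPR is exact. -/
open Matrix BigOperators

noncomputable section

/-- Trace inner product `⟨A,X⟩ = Σᵢⱼ Aᵢⱼ Xᵢⱼ`. -/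
def mInner {N : ℕ} (A X : Matrix (Fin N) (Fin N) ℝ) : ℝ :=
  ∑ i, ∑ j, A i j * X i j

/-- The quadratic function `u ↦ (u,1)ᵀ B (u,1)` on `ℝⁿ`. -/
def quadF {n : ℕ} (B : Matrix (Fin (n + 1)) (Fin (n + 1)) ℝ) (u : Fin n → ℝ) : ℝ :=
  Fin.snoc u 1 ⬝ᵥ (B *ᵥ Fin.snoc u 1)

/-- A relation on `ℝ` is standard if it is `≤`, `=`, or `≥`. -/
def IsStdRel (r : ℝ → ℝ → Prop) : Prop :=
  r = (· ≤ ·) ∨ r = (· = ·) ∨ r = (· ≥ ·)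

section Combined

variable (phat m : ℕ) (n : Fin phat → ℕ)
  (B : (p : Fin phat) → Fin (m + 1) → Matrix (Fin (n p + 1)) (Fin (n p + 1)) ℝ)
  (rel : Fin m → ℝ → ℝ → Prop)

/-- Feasibility of `u` for the sub-QCQP `p` with right-hand side `δ`. -/
def subQCQPFeas (p : Fin phat) (δ : Fin m → ℝ) (u : Fin (n p) → ℝ) : Prop :=
  ∀ k : Fin m, rel k (quadF (B p k.succ) u) (δ k)

/-- The optimal value `ζᵖ(δ)` of the sub-QCQP `p`. -/
def subQCQPVal (p : Fin phat) (δ : Fin m → ℝ) : EReal :=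
  sInf {y : EReal | ∃ u : Fin (n p) → ℝ,
    subQCQPFeas phat m n B rel p δ u ∧ y = ((quadF (B p 0) u : ℝ) : EReal)}

/-- Feasibility of `X` for the sub-SDPR `p` with right-hand side `δ`. -/
def subSDPRFeas (p : Fin phat) (δ : Fin m → ℝ)
    (X : Matrix (Fin (n p + 1)) (Fin (n p + 1)) ℝ) : Prop :=
  X.PosSemidef ∧ X (Fin.last (n p)) (Fin.last (n p)) = 1 ∧
    ∀ k : Fin m, rel k (mInner (B p k.succ) X) (δ k)

/-- The optimal value `ηᵖ(δ)` of the sub-SDPR `p`. -/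
def subSDPRVal (p : Fin phat) (δ : Fin m → ℝ) : EReal :=
  sInf {y : EReal | ∃ X : Matrix (Fin (n p + 1)) (Fin (n p + 1)) ℝ,
    subSDPRFeas phat m n B rel p δ X ∧ y = ((mInner (B p 0) X : ℝ) : EReal)}

/-- Feasibility for the horizontally connected (combined) QCQP with right-hand side `γ`. -/
def combQCQPFeas (γ : Fin m → ℝ) (u : (p : Fin phat) → Fin (n p) → ℝ) : Prop :=
  ∀ k : Fin m, rel k (∑ p, quadF (B p k.succ) (u p)) (γ k)

/-- The optimal value `ζ(γ)` of the combined QCQP. -/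
def combQCQPVal (γ : Fin m → ℝ) : EReal :=
  sInf {y : EReal | ∃ u : (p : Fin phat) → Fin (n p) → ℝ,
    combQCQPFeas phat m n B rel γ u ∧ y = ((∑ p, quadF (B p 0) (u p) : ℝ) : EReal)}

/-- Feasibility for the combined SDPR with right-hand side `γ`. -/
def combSDPRFeas (γ : Fin m → ℝ)
    (X : (p : Fin phat) → Matrix (Fin (n p + 1)) (Fin (n p + 1)) ℝ) : Prop :=
  (∀ p, (X p).PosSemidef ∧ X p (Fin.last (n p)) (Fin.last (n p)) = 1) ∧
    ∀ k : Fin m, rel k (∑ p, mInner (B p k.succ) (X p)) (γ k)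

/-- The optimal value `η(γ)` of the combined SDPR. -/
def combSDPRVal (γ : Fin m → ℝ) : EReal :=
  sInf {y : EReal | ∃ X : (p : Fin phat) → Matrix (Fin (n p + 1)) (Fin (n p + 1)) ℝ,
    combSDPRFeas phat m n B rel γ X ∧ y = ((∑ p, mInner (B p 0) (X p) : ℝ) : EReal)}

end Combined


lemma posSemidef_vecMulVec' {N : ℕ} (v : Fin N → ℝ) : (vecMulVec v v).PosSemidef := by
  refine Matrix.PosSemidef.of_dotProduct_mulVec_nonneg ?_ ?_
  · ext i j
    simp [Matrix.conjTranspose_apply, Matrix.vecMulVec_apply, mul_comm]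
  · intro x
    have key : star x ⬝ᵥ (vecMulVec v v *ᵥ x) = (v ⬝ᵥ x) * (v ⬝ᵥ x) := by
      simp only [star_trivial, dotProduct, mulVec, vecMulVec_apply]
      rw [Finset.sum_mul_sum]
      simp only [Finset.mul_sum]
      apply Finset.sum_congr rfl; intro i _
      apply Finset.sum_congr rfl; intro j _
      ring
    rw [key]; exact mul_self_nonneg _

lemma mInner_vecMulVec' {N : ℕ} (A : Matrix (Fin N) (Fin N) ℝ) (v : Fin N → ℝ) :
    mInner A (vecMulVec v v) = v ⬝ᵥ (A *ᵥ v) := by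
  simp only [mInner, vecMulVec_apply, dotProduct, mulVec, Finset.mul_sum]
  apply Finset.sum_congr rfl; intro i _
  apply Finset.sum_congr rfl; intro j _
  ring

lemma IsStdRel.refl' {r : ℝ → ℝ → Prop} (h : IsStdRel r) (a : ℝ) : r a a := by
  rcases h with h | h | h <;> subst h <;> simp

lemma IsStdRel.sum_mono' {r : ℝ → ℝ → Prop} (h : IsStdRel r) {ι : Type*} (s : Finset ι)
    {a b : ι → ℝ} {c : ℝ} (hab : ∀ i ∈ s, r (a i) (b i))
    (hbc : r (∑ i ∈ s, b i) c) : r (∑ i ∈ s, a i) c := by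
  rcases h with h | h | h <;> subst h
  · exact le_trans (Finset.sum_le_sum hab) hbc
  · rw [Finset.sum_congr rfl hab]; exact hbc
  · exact le_trans hbc (Finset.sum_le_sum hab)

lemma IsStdRel.replace' {r : ℝ → ℝ → Prop} (h : IsStdRel r) {a b s t : ℝ}
    (hab : r a b) (hbt : r (b + s) t) : r (a + s) t := by
  rcases h with h | h | h <;> subst h <;> linarith

/-- **Theorem 1.1.** If (I) every sub-SDPR is exact whenever its optimal value is finite, and
(II) the combined SDPR admits an optimal solution, then the combined SDPR is exact. -/
theorem combined_sdpr_exact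
    (phat m : ℕ) (hphat : 0 < phat) (hm : 0 < m)
    (n : Fin phat → ℕ)
    (B : (p : Fin phat) → Fin (m + 1) → Matrix (Fin (n p + 1)) (Fin (n p + 1)) ℝ)
    (hBsymm : ∀ p k, (B p k).IsSymm)
    (hBcorner : ∀ p k, B p k (Fin.last (n p)) (Fin.last (n p)) = 0)
    (rel : Fin m → ℝ → ℝ → Prop) (hrel : ∀ k, IsStdRel (rel k))
    (γ : Fin m → ℝ)
    (hI : ∀ (p : Fin phat) (δ : Fin m → ℝ),
      subSDPRVal phat m n B rel p δ ≠ ⊥ → subSDPRVal phat m n B rel p δ ≠ ⊤ →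
      subSDPRVal phat m n B rel p δ = subQCQPVal phat m n B rel p δ)
    (hII : ∃ X : (p : Fin phat) → Matrix (Fin (n p + 1)) (Fin (n p + 1)) ℝ,
      combSDPRFeas phat m n B rel γ X ∧
      ((∑ p, mInner (B p 0) (X p) : ℝ) : EReal) = combSDPRVal phat m n B rel γ) :
    combSDPRVal phat m n B rel γ = combQCQPVal phat m n B rel γ := by
  classical
  obtain ⟨X, hXfeas, hXval⟩ := hII
  have hNE : Nonempty (Fin phat) := ⟨⟨0, hphat⟩⟩
  -- Direction 1: η(γ) ≤ ζ(γ)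
  have hle1 : combSDPRVal phat m n B rel γ ≤ combQCQPVal phat m n B rel γ := by
    apply sInf_le_sInf
    rintro y ⟨u, hufeas, rfl⟩
    refine ⟨fun p => vecMulVec (Fin.snoc (u p) 1) (Fin.snoc (u p) 1), ⟨?_, ?_⟩, ?_⟩
    · intro p
      refine ⟨posSemidef_vecMulVec' _, ?_⟩
      simp [vecMulVec_apply, Fin.snoc_last]
    · intro k
      have h := hufeas k
      simpa only [mInner_vecMulVec', quadF] using h
    · norm_cast
      simp only [mInner_vecMulVec', quadF]
  -- Direction 2: ζ(γ) ≤ η(γ)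
  have hle2 : combQCQPVal phat m n B rel γ ≤ combSDPRVal phat m n B rel γ := by
    rw [← hXval]
    have hsubfeas : ∀ p, subSDPRFeas phat m n B rel p
        (fun k => mInner (B p k.succ) (X p)) (X p) :=
      fun p => ⟨(hXfeas.1 p).1, (hXfeas.1 p).2, fun k => (hrel k).refl' _⟩
    have hsuble : ∀ p, subSDPRVal phat m n B rel p (fun k => mInner (B p k.succ) (X p))
        ≤ ((mInner (B p 0) (X p) : ℝ) : EReal) :=
      fun p => sInf_le ⟨X p, hsubfeas p, rfl⟩
    have hnetop : ∀ p, subSDPRVal phat m n B rel p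
        (fun k => mInner (B p k.succ) (X p)) ≠ ⊤ := by
      intro p h
      have := hsuble p
      rw [h] at this
      simp [top_le_iff] at this
    have hnebot : ∀ p, subSDPRVal phat m n B rel p
        (fun k => mInner (B p k.succ) (X p)) ≠ ⊥ := by
      intro p hbot
      set rest : ℝ := ∑ q ∈ Finset.univ.erase p, mInner (B q 0) (X q) with hrest
      unfold subSDPRVal at hbot
      obtain ⟨y, hy, hylt⟩ := (sInf_eq_bot.mp hbot)
        (((∑ q, mInner (B q 0) (X q)) - rest - 1 : ℝ) : EReal) (EReal.bot_lt_coe _)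
      obtain ⟨X', hX'feas, rfl⟩ := hy
      have hX'lt : mInner (B p 0) X' < (∑ q, mInner (B q 0) (X q)) - rest - 1 :=
        EReal.coe_lt_coe_iff.mp hylt
      set Y : (q : Fin phat) → Matrix (Fin (n q + 1)) (Fin (n q + 1)) ℝ :=
        Function.update X p X' with hYdef
      have hYsplit : ∀ j : Fin (m + 1), ∑ q, mInner (B q j) (Y q)
          = mInner (B p j) X' + ∑ q ∈ Finset.univ.erase p, mInner (B q j) (X q) := by
        intro j
        rw [← Finset.add_sum_erase _ (fun q => mInner (B q j) (Y q)) (Finset.mem_univ p)]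
        congr 1
        · rw [hYdef, Function.update_self]
        · apply Finset.sum_congr rfl
          intro q hq
          rw [hYdef, Function.update_of_ne (Finset.ne_of_mem_erase hq)]
      have hYfeas : combSDPRFeas phat m n B rel γ Y := by
        constructor
        · intro q
          by_cases hq : q = p
          · subst hq
            rw [hYdef, Function.update_self]
            exact ⟨hX'feas.1, hX'feas.2.1⟩
          · rw [hYdef, Function.update_of_ne hq]
            exact hXfeas.1 q
        · intro k
          have hold := hXfeas.2 k
          rw [← Finset.add_sum_erase _ (fun q => mInner (B q k.succ) (X q))
            (Finset.mem_univ p)] at hold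
          rw [hYsplit k.succ]
          exact (hrel k).replace' (hX'feas.2.2 k) hold
      have hYle : combSDPRVal phat m n B rel γ
          ≤ ((∑ q, mInner (B q 0) (Y q) : ℝ) : EReal) :=
        sInf_le ⟨Y, hYfeas, rfl⟩
      rw [← hXval] at hYle
      have hreal : (∑ q, mInner (B q 0) (X q)) ≤ ∑ q, mInner (B q 0) (Y q) :=
        EReal.coe_le_coe_iff.mp hYle
      rw [hYsplit 0] at hreal
      rw [← hrest] at hreal
      linarith
    have hQle : ∀ p, subQCQPVal phat m n B rel p (fun k => mInner (B p k.succ) (X p))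
        ≤ ((mInner (B p 0) (X p) : ℝ) : EReal) := by
      intro p
      rw [← hI p _ (hnebot p) (hnetop p)]
      exact hsuble p
    by_contra hcon
    push_neg at hcon
    obtain ⟨z, hz1, hz2⟩ := EReal.exists_between_coe_real hcon
    have hz1' : (∑ q, mInner (B q 0) (X q)) < z := EReal.coe_lt_coe_iff.mp hz1
    have hphat' : (0 : ℝ) < (phat : ℝ) := Nat.cast_pos.mpr hphat
    set ε : ℝ := (z - ∑ q, mInner (B q 0) (X q)) / phat with hε
    have hεpos : 0 < ε := div_pos (by linarith) hphat'
    have hex : ∀ p, ∃ u : Fin (n p) → ℝ,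
        subQCQPFeas phat m n B rel p (fun k => mInner (B p k.succ) (X p)) u ∧
        quadF (B p 0) u < mInner (B p 0) (X p) + ε := by
      intro p
      have hlt : subQCQPVal phat m n B rel p (fun k => mInner (B p k.succ) (X p))
          < ((mInner (B p 0) (X p) + ε : ℝ) : EReal) := by
        refine lt_of_le_of_lt (hQle p) ?_
        exact_mod_cast lt_add_of_pos_right _ hεpos
      unfold subQCQPVal at hlt
      obtain ⟨y, ⟨u, hu, rfl⟩, hylt⟩ := sInf_lt_iff.mp hlt
      exact ⟨u, hu, EReal.coe_lt_coe_iff.mp hylt⟩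
    choose u hufeas hult using hex
    have hcomb : combQCQPFeas phat m n B rel γ u := by
      intro k
      exact (hrel k).sum_mono' Finset.univ (fun p _ => hufeas p k) (hXfeas.2 k)
    have hsumlt : ∑ p, quadF (B p 0) (u p) < z := by
      have h1 : ∑ p, quadF (B p 0) (u p) < ∑ p, (mInner (B p 0) (X p) + ε) :=
        Finset.sum_lt_sum_of_nonempty Finset.univ_nonempty (fun p _ => hult p)
      have h2 : ∑ p : Fin phat, (mInner (B p 0) (X p) + ε)
          = (∑ q, mInner (B q 0) (X q)) + (phat : ℝ) * ε := by
        rw [Finset.sum_add_distrib]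
        simp [Finset.sum_const, Finset.card_univ, nsmul_eq_mul]
      have h3 : (phat : ℝ) * ε = z - ∑ q, mInner (B q 0) (X q) := by
        rw [hε]
        field_simp
      linarith
    have hle : combQCQPVal phat m n B rel γ
        ≤ ((∑ p, quadF (B p 0) (u p) : ℝ) : EReal) :=
      sInf_le ⟨u, hcomb, rfl⟩
    have : combQCQPVal phat m n B rel γ < (z : EReal) :=
      lt_of_le_of_lt hle (EReal.coe_lt_coe_iff.mpr hsumlt)
    exact absurd (hz2.trans this) (lt_irrefl _)
  exact le_antisymm hle1 hle2
end
end

section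
/- Let 2 < α < 3. Then the infimum of V₁₁ − W over all symmetric positive semidefinite 2×2 matrices V and reals W ≥ 0 satisfying V₂₂ = 1, V₁₁ − (4+α)V₁₂ + 4α V₂₂ ≤ 0, and −V₁₁ + 5V₁₂ − 6V₂₂ + W ≤ 0 equals (14α − 24)/(α − 1), and (14α − 24)/(α − 1) < 9. Hence this SDP relaxation is not exact, since the corresponding QCQP has optimal value 9. -/
open Matrix

lemma psd2_aux (a b : ℝ) (h : b ^ 2 ≤ a) :
    (!![a, b; b, 1] : Matrix (Fin 2) (Fin 2) ℝ).PosSemidef := by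
  rw [posSemidef_iff_dotProduct_mulVec]
  constructor
  · ext i j
    fin_cases i <;> fin_cases j <;> simp [Matrix.conjTranspose, Matrix.vecHead, Matrix.vecTail]
  · intro x
    have hx : star x ⬝ᵥ (!![a, b; b, 1] : Matrix (Fin 2) (Fin 2) ℝ).mulVec x
        = a * x 0 * x 0 + b * x 0 * x 1 + (b * x 1 * x 0 + x 1 * x 1) := by
      simp [dotProduct, Matrix.mulVec, Fin.sum_univ_two]
      ring
    rw [hx]
    nlinarith [sq_nonneg (b * x 0 + x 1), sq_nonneg (x 0)]

/-- **Example 5.1 (2 < α < 3, SDPR).** For `2 < α < 3`, the infimum of `V₁₁ − W` over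
positive semidefinite `V ∈ S²₊` and `W ≥ 0` with `V₂₂ = 1`,
`V₁₁ − (4+α)V₁₂ + 4αV₂₂ ≤ 0`, and `−V₁₁ + 5V₁₂ − 6V₂₂ + W ≤ 0` equals
`(14α − 24)/(α − 1) < 9`; hence the SDP relaxation is not exact, the QCQP optimal
value being `9`. -/
theorem example51_sdpr_not_exact (α : ℝ) (hα1 : 2 < α) (hα2 : α < 3) :
    IsGLB {y : ℝ | ∃ (V : Matrix (Fin 2) (Fin 2) ℝ) (W : ℝ),
        V.PosSemidef ∧ 0 ≤ W ∧
        V 1 1 = 1 ∧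
        V 0 0 - (4 + α) * V 0 1 + 4 * α * V 1 1 ≤ 0 ∧
        -V 0 0 + 5 * V 0 1 - 6 * V 1 1 + W ≤ 0 ∧
        y = V 0 0 - W}
      ((14 * α - 24) / (α - 1)) ∧
    (14 * α - 24) / (α - 1) < 9 := by
  have hα : (0:ℝ) < α - 1 := by linarith
  set t : ℝ := (4 * α - 6) / (α - 1) with ht
  have htdef : t * (α - 1) = 4 * α - 6 := by
    rw [ht, div_mul_cancel₀ _ (ne_of_gt hα)]
  have ht2 : 2 < t := by
    rw [ht, lt_div_iff₀ hα]; nlinarith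
  have ht3 : t < 3 := by
    rw [ht, div_lt_iff₀ hα]; nlinarith
  have hval : (14 * α - 24) / (α - 1) = 5 * t - 6 := by
    rw [ht]; field_simp; ring
  -- membership witness
  have hmem : (14 * α - 24) / (α - 1) ∈ {y : ℝ | ∃ (V : Matrix (Fin 2) (Fin 2) ℝ) (W : ℝ),
        V.PosSemidef ∧ 0 ≤ W ∧
        V 1 1 = 1 ∧
        V 0 0 - (4 + α) * V 0 1 + 4 * α * V 1 1 ≤ 0 ∧
        -V 0 0 + 5 * V 0 1 - 6 * V 1 1 + W ≤ 0 ∧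
        y = V 0 0 - W} := by
    refine ⟨!![5 * t - 6, t; t, 1], 0, ?_, le_refl 0, ?_, ?_, ?_, ?_⟩
    · exact psd2_aux _ _ (by nlinarith)
    · rfl
    · show (5 * t - 6) - (4 + α) * t + 4 * α * 1 ≤ 0
      nlinarith
    · show -(5 * t - 6) + 5 * t - 6 * 1 + 0 ≤ 0
      linarith
    · show _ = (5 * t - 6) - 0
      rw [hval]; ring
  constructor
  · constructor
    · rintro y ⟨V, W, hPSD, hW, h11, hc2, hc3, hy⟩
      rw [h11] at hc2 hc3
      -- y = V00 - W ≥ 5 * V01 - 6, and (α-1) * V01 ≥ 4α - 6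
      have h1 : 5 * V 0 1 - 6 ≤ y := by linarith [hy ▸ (by linarith : V 0 0 - W ≥ 5 * V 0 1 - 6)]
      have h2 : 4 * α - 6 ≤ (α - 1) * V 0 1 := by nlinarith
      rw [div_le_iff₀ hα]
      nlinarith
    · intro b hb
      exact hb hmem
  · rw [div_lt_iff₀ hα]; nlinarith
end

section
/- Let α = 2. Then the infimum of v₁² − w² over (v₁, v₂, w) ∈ ℝ³ with v₂² = 1, (v₁ − 2v₂)(v₁ − 4v₂) ≤ 0, and −(v₁ − 2v₂)(v₁ − 3v₂) + w² ≤ 0 equals 4, and the infimum of V₁₁ − W over symmetric positive semidefinite 2×2 matrices V and reals W ≥ 0 with V₂₂ = 1, V₁₁ − 6V₁₂ + 8V₂₂ ≤ 0, and −V₁₁ + 5V₁₂ − 6V₂₂ + W ≤ 0 also equals 4. Hence the SDP relaxation is exact at α = 2. -/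
open Matrix

/-- **Example 5.1 (α = 2).** At `α = 2`, the QCQP infimum of `v₁² − w²` subject to
`v₂² = 1`, `(v₁ − 2v₂)(v₁ − 4v₂) ≤ 0`, `−(v₁ − 2v₂)(v₁ − 3v₂) + w² ≤ 0` equals `4`,
and the SDP relaxation infimum of `V₁₁ − W` subject to `V ⪰ 0`, `W ≥ 0`, `V₂₂ = 1`,
`V₁₁ − 6V₁₂ + 8V₂₂ ≤ 0`, `−V₁₁ + 5V₁₂ − 6V₂₂ + W ≤ 0` also equals `4`; hence the
SDP relaxation is exact at `α = 2`. -/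
theorem example51_alpha_two_exact :
    IsGLB {y : ℝ | ∃ v₁ v₂ w : ℝ,
        v₂ ^ 2 = 1 ∧
        (v₁ - 2 * v₂) * (v₁ - 4 * v₂) ≤ 0 ∧
        -((v₁ - 2 * v₂) * (v₁ - 3 * v₂)) + w ^ 2 ≤ 0 ∧
        y = v₁ ^ 2 - w ^ 2} 4 ∧
    IsGLB {y : ℝ | ∃ (V : Matrix (Fin 2) (Fin 2) ℝ) (W : ℝ),
        V.PosSemidef ∧ 0 ≤ W ∧
        V 1 1 = 1 ∧
        V 0 0 - 6 * V 0 1 + 8 * V 1 1 ≤ 0 ∧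
        -V 0 0 + 5 * V 0 1 - 6 * V 1 1 + W ≤ 0 ∧
        y = V 0 0 - W} 4 := by
  constructor
  · apply IsLeast.isGLB
    constructor
    · exact ⟨2, 1, 0, by norm_num⟩
    · rintro y ⟨v₁, v₂, w, h1, h2, h3, rfl⟩
      nlinarith [sq_nonneg w, sq_nonneg (v₁ - 2*v₂), sq_nonneg (v₁ - 4*v₂),
        sq_nonneg (v₁*v₂ - 2), sq_nonneg (v₁*v₂ - 4), sq_nonneg v₁, sq_nonneg (v₁+v₂),
        sq_nonneg (v₁-v₂), mul_self_nonneg ((v₁-2*v₂)*(v₁-4*v₂))]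
  · apply IsLeast.isGLB
    constructor
    · refine ⟨!![(4:ℝ), 2; 2, 1], 0, ?_, le_refl 0, by norm_num, by norm_num, by norm_num,
        by norm_num⟩
      refine posSemidef_iff_dotProduct_mulVec.mpr ?_
      constructor
      · ext i j
        fin_cases i <;> fin_cases j <;> simp
      · intro x
        have : star x = x := rfl
        rw [this]
        simp [dotProduct, mulVec, Fin.sum_univ_two]
        nlinarith [sq_nonneg (2 * x 0 + x 1)]
    · rintro y ⟨V, W, hV, hW, h11, h2, h3, rfl⟩
      have hsym : V 1 0 = V 0 1 := by
        have := congrFun (congrFun hV.1 1) 0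
        simpa using this.symm
      have hq := hV.dotProduct_mulVec_nonneg ![1, -V 0 1]
      simp [dotProduct, mulVec, Fin.sum_univ_two] at hq
      rw [hsym, h11] at hq
      -- hq : 0 ≤ V00 - V01² essentially
      nlinarith [sq_nonneg (V 0 1 - 2), sq_nonneg (V 0 1 - 4)]
end
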